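/- For all n, k ∈ ℕ with k ≤ n: if n − k is even then the k-th derivative of P_n at 0 equals P_n^{(k)}(0) = (−1)^{(n−k)/2}·(n+k−1)!!/(n−k)!!, while if n − k is odd then P_n^{(k)}(0) = 0. -/

import Mathlib

open Polynomial
open scoped Nat

lemma coeff_key (n N : ℕ) : ((X^2 - 1 : ℝ[X])^n).coeff N =
    if 2 ∣ N ∧ N / 2 ≤ n then (-1 : ℝ)^(n + N/2) * (n.choose (N/2)) else 0 := by
  have expand : ((X^2 - 1 : ℝ[X])^n) =
      ∑ m ∈ Finset.range (n+1), C ((-1:ℝ)^(m+n) * n.choose m) * X ^ (2*m) := by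
    rw [sub_pow]
    refine Finset.sum_congr rfl fun m _ => ?_
    simp only [map_mul, map_pow, map_neg, map_one, map_natCast, one_pow, mul_one, ← pow_mul]
    ring
  rw [expand, finset_sum_coeff]
  simp only [coeff_C_mul, coeff_X_pow]
  by_cases h : 2 ∣ N ∧ N / 2 ≤ n
  · rw [if_pos h, Finset.sum_eq_single (N/2)]
    · rw [if_pos (by omega)]; ring_nf
    · intro m _ hm; rw [if_neg (by omega), mul_zero]
    · intro hmem; exact absurd (Finset.mem_range.2 (by omega)) hmem
  · rw [if_neg h]
    refine Finset.sum_eq_zero fun m hmem => ?_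
    rw [Finset.mem_range] at hmem
    rw [if_neg (by omega), mul_zero]

lemma two_mul_factorial (a : ℕ) : (2*a)! = 2^a * a ! * (2*a-1)‼ := by
  cases a with
  | zero => simp
  | succ b =>
    have h1 : (2*(b+1)) = (2*(b+1)-1) + 1 := by omega
    rw [h1, Nat.factorial_eq_mul_doubleFactorial, ← h1, Nat.doubleFactorial_two_mul]

/-- The `n`-th Legendre polynomial, via the Rodrigues formula. -/
noncomputable def legendre (n : ℕ) : Polynomial ℝ :=
  Polynomial.C (1 / ((2:ℝ) ^ n * n.factorial)) *
    Polynomial.derivative^[n] ((Polynomial.X ^ 2 - 1) ^ n)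

/-- value of the `k`-th derivative of `P_n` at `0`, for `k ≤ n`. -/
theorem stmt_8 (n k : ℕ) (hk : k ≤ n) :
    (Even (n - k) →
      (Polynomial.derivative^[k] (legendre n)).eval 0
        = (-1 : ℝ) ^ ((n - k) / 2) * ((n + k - 1)‼ : ℝ) / ((n - k)‼ : ℝ)) ∧
    (¬ Even (n - k) → (Polynomial.derivative^[k] (legendre n)).eval 0 = 0) := by
  have heval : (Polynomial.derivative^[k] (legendre n)).eval 0
      = (1 / ((2:ℝ) ^ n * n.factorial)) * ((n+k)! : ℝ) * ((X^2 - 1 : ℝ[X])^n).coeff (n+k) := by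
    rw [legendre, iterate_derivative_C_mul, ← coeff_zero_eq_eval_zero, coeff_C_mul,
      ← Function.iterate_add_apply, coeff_iterate_derivative]
    simp [Nat.descFactorial_self]
    ring
  constructor
  · intro hev
    obtain ⟨c, hc⟩ := hev
    set a := (n+k)/2 with ha
    set b := (n-k)/2 with hb
    have hd : 2 ∣ n + k := by omega
    have h2a : n + k = 2*a := by omega
    have h2b : n - k = 2*b := by omega
    have hab : n = a + b := by omega
    rw [heval, coeff_key, if_pos ⟨hd, by omega⟩]
    have hsign : (-1:ℝ)^(n + (n+k)/2) = (-1)^b := by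
      rw [show n + (n+k)/2 = b + 2*a by omega, pow_add]
      simp [pow_mul]
    have hch : n.choose ((n+k)/2) * a ! * b ! = n ! := by
      have := Nat.choose_mul_factorial_mul_factorial (show a ≤ n by omega)
      rwa [show n - a = b by omega] at this
    have hnat : (n+k)! * (n.choose ((n+k)/2) * a ! * b !) * (n-k)‼ = (n+k-1)‼ * 2^n * (n ! * a ! * b !) := by
      rw [hch, h2a, h2b, two_mul_factorial, Nat.doubleFactorial_two_mul, hab]
      ring_nf
    have hnat2 : (n+k)! * n.choose ((n+k)/2) * (n-k)‼ = (n+k-1)‼ * 2^n * n ! := by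
      apply Nat.eq_of_mul_eq_mul_right (Nat.mul_pos a.factorial_pos b.factorial_pos)
      ring_nf
      ring_nf at hnat
      simpa [Nat.mul_comm, Nat.mul_assoc, Nat.mul_left_comm] using hnat
    have hnat' : ((n+k)! : ℝ) * (n.choose ((n+k)/2)) * (n-k)‼ = (n+k-1)‼ * 2^n * n ! := by
      exact_mod_cast congrArg (Nat.cast : ℕ → ℝ) hnat2
    rw [hsign, hb]
    have h2n : ((2:ℝ)^n) ≠ 0 := by positivity
    have hnf : ((n ! : ℝ)) ≠ 0 := Nat.cast_ne_zero.2 (Nat.factorial_ne_zero n)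
    have hdf : (((n-k)‼ : ℕ) : ℝ) ≠ 0 := Nat.cast_ne_zero.2 (Nat.doubleFactorial_pos _).ne'
    field_simp
    linear_combination hnat'
  · intro hodd
    rw [Nat.even_iff] at hodd
    rw [heval, coeff_key, if_neg (by omega), mul_zero]
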